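/- For ε > 0, define Φ(ε) := 1 − (√(1+ε) + F(ε)/√(1+ε))·artanh(1/√(1+ε)) where F(ε) := −(1+ε)[1 − 2 ln((2+ε)/(2−ε))/ln((2+ε)²/ε)]² and 0 < ε < 2. Then Φ(ε) ≥ 1 − 2√(1+ε)·ln((2+ε)/(2−ε)), and consequently liminf_{ε→0⁺} Φ(ε) ≥ 1; in fact lim_{ε→0⁺} Φ(ε) = 1. -/

import Mathlib

open Real Set Filter

/-- The inverse hyperbolic tangent. -/
noncomputable def _root_.artanh (x : ℝ) : ℝ := (1/2) * Real.log ((1 + x) / (1 - x))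

/-- F(ε) := −(1+ε)[1 − 2 ln((2+ε)/(2−ε))/ln((2+ε)²/ε)]². -/
noncomputable def Ffun (ε : ℝ) : ℝ :=
  -(1 + ε) * (1 - 2 * Real.log ((2 + ε) / (2 - ε)) / Real.log ((2 + ε)^2 / ε))^2

/-- Φ(ε) := 1 − (√(1+ε) + F(ε)/√(1+ε))·artanh(1/√(1+ε)). -/
noncomputable def Phi (ε : ℝ) : ℝ :=
  1 - (Real.sqrt (1 + ε) + Ffun ε / Real.sqrt (1 + ε)) *
    _root_.artanh (1 / Real.sqrt (1 + ε))

noncomputable def dd (ε : ℝ) : ℝ :=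
  2 * Real.log ((2 + ε) / (2 - ε)) / Real.log ((2 + ε)^2 / ε)

lemma sqrt_facts (ε : ℝ) (h0 : 0 < ε) :
    1 < Real.sqrt (1 + ε) ∧ (Real.sqrt (1 + ε))^2 = 1 + ε := by
  have hsq : (Real.sqrt (1 + ε))^2 = 1 + ε := Real.sq_sqrt (by linarith)
  refine ⟨?_, hsq⟩
  nlinarith [Real.sqrt_nonneg (1 + ε)]

lemma phi_eq (ε : ℝ) (h0 : 0 < ε) :
    Phi ε = 1 - Real.sqrt (1 + ε) * (2 * dd ε - (dd ε)^2) *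
      _root_.artanh (1 / Real.sqrt (1 + ε)) := by
  obtain ⟨hs1, hssq⟩ := sqrt_facts ε h0
  have hs0 : (0:ℝ) < Real.sqrt (1 + ε) := by linarith
  unfold Phi Ffun dd
  set s := Real.sqrt (1 + ε) with hs
  set d := 2 * Real.log ((2 + ε) / (2 - ε)) / Real.log ((2 + ε)^2 / ε) with hd
  have key : s + -(1 + ε) * (1 - d)^2 / s = s * (2 * d - d^2) := by
    rw [← hssq]
    field_simp
    ring
  rw [key]

lemma artanh_nonneg (ε : ℝ) (h0 : 0 < ε) : 0 ≤ _root_.artanh (1 / Real.sqrt (1 + ε)) := by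
  obtain ⟨hs1, hssq⟩ := sqrt_facts ε h0
  have hs0 : (0:ℝ) < Real.sqrt (1 + ε) := by linarith
  unfold _root_.artanh
  have h1 : 0 < 1 - 1 / Real.sqrt (1 + ε) := by
    have : 1 / Real.sqrt (1 + ε) < 1 := by rw [div_lt_one hs0]; linarith
    linarith
  have h2 : 0 ≤ 1 / Real.sqrt (1 + ε) := by positivity
  have harg : (1:ℝ) ≤ (1 + 1 / Real.sqrt (1 + ε)) / (1 - 1 / Real.sqrt (1 + ε)) := by
    rw [le_div_iff₀ h1]; linarith
  have hlog := Real.log_nonneg harg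
  exact mul_nonneg (by norm_num) hlog

lemma artanh_le (ε : ℝ) (h0 : 0 < ε) (h2 : ε < 2) :
    _root_.artanh (1 / Real.sqrt (1 + ε)) ≤ Real.log ((2 + ε)^2 / ε) / 2 := by
  obtain ⟨hs1, hssq⟩ := sqrt_facts ε h0
  set s := Real.sqrt (1 + ε) with hs
  have hs0 : (0:ℝ) < s := by linarith
  have hεeq : s^2 - 1 = ε := by linarith
  have hne1 : s - 1 ≠ 0 := sub_ne_zero.mpr (ne_of_gt hs1)
  have hne2 : s + 1 ≠ 0 := by positivity
  have harg : (1 + 1 / s) / (1 - 1 / s) = (s + 1)^2 / ε := by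
    rw [← hεeq]
    have : s^2 - 1 = (s - 1) * (s + 1) := by ring
    rw [this]
    field_simp
  have hsle : s ≤ 1 + ε := by nlinarith
  have hle : (s + 1)^2 / ε ≤ (2 + ε)^2 / ε :=
    (div_le_div_iff_of_pos_right h0).mpr (by nlinarith)
  have hpos : 0 < (s + 1)^2 / ε := div_pos (by positivity) h0
  unfold _root_.artanh
  rw [harg]
  have hlog : Real.log ((s + 1)^2 / ε) ≤ Real.log ((2 + ε)^2 / ε) :=
    Real.log_le_log hpos hle
  linarith

lemma dd_nonneg (ε : ℝ) (h0 : 0 < ε) (h2 : ε < 2) : 0 ≤ dd ε := by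
  unfold dd
  have hL : 0 ≤ Real.log ((2 + ε) / (2 - ε)) :=
    Real.log_nonneg (by rw [le_div_iff₀ (by linarith)]; linarith)
  have hM : 0 < Real.log ((2 + ε)^2 / ε) :=
    Real.log_pos (by rw [lt_div_iff₀ h0]; nlinarith)
  positivity

lemma dd_mul_le (ε : ℝ) (h0 : 0 < ε) (h2 : ε < 2) :
    dd ε * _root_.artanh (1 / Real.sqrt (1 + ε)) ≤ Real.log ((2 + ε) / (2 - ε)) := by
  have hM : 0 < Real.log ((2 + ε)^2 / ε) :=
    Real.log_pos (by rw [lt_div_iff₀ h0]; nlinarith)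
  have hA := _root_.artanh_le ε h0 h2
  have hd := dd_nonneg ε h0 h2
  have step : dd ε * _root_.artanh (1 / Real.sqrt (1 + ε)) ≤ dd ε * (Real.log ((2 + ε)^2 / ε) / 2) :=
    mul_le_mul_of_nonneg_left hA hd
  have : dd ε * (Real.log ((2 + ε)^2 / ε) / 2) = Real.log ((2 + ε) / (2 - ε)) := by
    unfold dd
    field_simp
  linarith

lemma phi_lower (ε : ℝ) (h0 : 0 < ε) (h2 : ε < 2) :
    Phi ε ≥ 1 - 2 * Real.sqrt (1 + ε) * Real.log ((2 + ε) / (2 - ε)) := by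
  rw [phi_eq ε h0]
  obtain ⟨hs1, hssq⟩ := sqrt_facts ε h0
  have hs0 : (0:ℝ) < Real.sqrt (1 + ε) := by linarith
  have hA := _root_.artanh_nonneg ε h0
  have hd := dd_nonneg ε h0 h2
  have hdA := dd_mul_le ε h0 h2
  set s := Real.sqrt (1 + ε)
  set d := dd ε
  set A := _root_.artanh (1 / s)
  set L := Real.log ((2 + ε) / (2 - ε))
  have h1 : 0 ≤ s * d^2 * A := by positivity
  nlinarith [mul_le_mul_of_nonneg_left hdA hs0.le]

lemma phi_upper (ε : ℝ) (h0 : 0 < ε) (h1 : ε < 1) : Phi ε ≤ 1 := by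
  rw [phi_eq ε h0]
  obtain ⟨hs1, hssq⟩ := sqrt_facts ε h0
  have hs0 : (0:ℝ) < Real.sqrt (1 + ε) := by linarith
  have hA := _root_.artanh_nonneg ε h0
  have hd := dd_nonneg ε h0 (by linarith)
  have hd2 : dd ε ≤ 2 := by
    unfold dd
    have hM : 0 < Real.log ((2 + ε)^2 / ε) :=
      Real.log_pos (by rw [lt_div_iff₀ h0]; nlinarith)
    rw [div_le_iff₀ hM]
    have hLM : Real.log ((2 + ε) / (2 - ε)) ≤ Real.log ((2 + ε)^2 / ε) := by
      apply Real.log_le_log (div_pos (by linarith) (by linarith))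
      rw [div_le_div_iff₀ (by linarith) h0]
      nlinarith
    linarith
  have : 0 ≤ Real.sqrt (1 + ε) * (2 * dd ε - (dd ε)^2) * _root_.artanh (1 / Real.sqrt (1 + ε)) := by
    apply mul_nonneg (mul_nonneg hs0.le ?_) hA
    nlinarith
  linarith

lemma tendsto_lower :
    Tendsto (fun ε : ℝ => 1 - 2 * Real.sqrt (1 + ε) * Real.log ((2 + ε) / (2 - ε)))
      (nhdsWithin 0 (Ioi 0)) (nhds 1) := by
  have hc : ContinuousAt (fun ε : ℝ => 1 - 2 * Real.sqrt (1 + ε) * Real.log ((2 + ε) / (2 - ε))) 0 := by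
    have h1 : ContinuousAt (fun ε : ℝ => (2 + ε) / (2 - ε)) 0 :=
      ContinuousAt.div (by fun_prop) (by fun_prop) (by norm_num)
    have h3 : ContinuousAt (fun ε : ℝ => Real.log ((2 + ε) / (2 - ε))) 0 :=
      h1.log (by norm_num)
    have h4 : ContinuousAt (fun ε : ℝ => Real.sqrt (1 + ε)) 0 := by fun_prop
    exact continuousAt_const.sub ((continuousAt_const.mul h4).mul h3)
  have hT : Tendsto (fun ε : ℝ => 1 - 2 * Real.sqrt (1 + ε) * Real.log ((2 + ε) / (2 - ε)))
      (nhds 0) (nhds (1 - 2 * Real.sqrt (1 + 0) * Real.log ((2 + 0) / (2 - 0)))) := hc.tendsto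
  norm_num [Real.log_one] at hT
  exact hT.mono_left nhdsWithin_le_nhds

/-- For 0 < ε < 2, Φ(ε) ≥ 1 − 2√(1+ε)·ln((2+ε)/(2−ε)); consequently
liminf_{ε→0⁺} Φ(ε) ≥ 1, and in fact lim_{ε→0⁺} Φ(ε) = 1. -/
theorem stmt_14 :
    (∀ ε : ℝ, 0 < ε → ε < 2 →
      Phi ε ≥ 1 - 2 * Real.sqrt (1 + ε) * Real.log ((2 + ε) / (2 - ε))) ∧
    (1 : ℝ) ≤ Filter.liminf Phi (nhdsWithin 0 (Ioi 0)) ∧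
    Filter.Tendsto Phi (nhdsWithin 0 (Ioi 0)) (nhds 1) := by
  have hT : Filter.Tendsto Phi (nhdsWithin 0 (Ioi 0)) (nhds 1) := by
    have hmem : Ioo (0:ℝ) 1 ∈ nhdsWithin 0 (Ioi 0) :=
      Ioo_mem_nhdsGT_of_mem (by constructor <;> norm_num)
    apply tendsto_of_tendsto_of_tendsto_of_le_of_le' tendsto_lower tendsto_const_nhds
    · filter_upwards [hmem] with ε hε
      exact phi_lower ε hε.1 (by linarith [hε.2])
    · filter_upwards [hmem] with ε hε
      exact phi_upper ε hε.1 hε.2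
  refine ⟨fun ε h0 h2 => phi_lower ε h0 h2, ?_, hT⟩
  have h := hT.liminf_eq
  rw [h]
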